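/- For all real numbers A, B, C > 1, the function x ↦ s(x, B, C) has derivative (A − 1 − B − C) / ((A − 1)·√(A² + B² + C² + 2ABC − 1)) at the point x = A. (Lemma 2.1(3).) -/

import Mathlib

/-- The inverse hyperbolic cosine. -/
noncomputable def arcosh (x : ℝ) : ℝ := Real.log (x + Real.sqrt (x ^ 2 - 1))

/-- Total length of the three non-alternating sides of a right-angled hyperbolic
hexagon whose alternating sides have lengths `arcosh A`, `arcosh B`, `arcosh C`. -/
noncomputable def s (A B C : ℝ) : ℝ :=
  arcosh ((A + B * C) / Real.sqrt ((B ^ 2 - 1) * (C ^ 2 - 1))) +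
  arcosh ((B + A * C) / Real.sqrt ((A ^ 2 - 1) * (C ^ 2 - 1))) +
  arcosh ((C + A * B) / Real.sqrt ((A ^ 2 - 1) * (B ^ 2 - 1)))

lemma arcosh_deriv (u : ℝ → ℝ) (u' x : ℝ) (hu : HasDerivAt u u' x) (h1 : 1 < u x) :
    HasDerivAt (fun y => arcosh (u y)) (u' / Real.sqrt ((u x)^2 - 1)) x := by
  have hv : 0 < (u x)^2 - 1 := by nlinarith
  have hs : 0 < Real.sqrt ((u x)^2 - 1) := Real.sqrt_pos.2 hv
  have h2 : HasDerivAt (fun y => (u y)^2 - 1) (2 * u x * u') x := by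
    simpa using ((hu.pow 2).sub_const 1)
  have h3 := h2.sqrt hv.ne'
  have h4 := (hu.fun_add h3).log (by positivity)
  have hsq : Real.sqrt ((u x)^2-1) ^ 2 = (u x)^2 - 1 := Real.sq_sqrt hv.le
  convert h4 using 1
  · rfl
  field_simp
  nlinarith [hsq]

-- generic middle-term lemma: derivative of arcosh ((P + x*Q)/√((x²−1)(Q²−1))) at A
lemma term_deriv (A P Q : ℝ) (hA : 1 < A) (hP : 1 < P) (hQ : 1 < Q) :
    HasDerivAt (fun x => arcosh ((P + x * Q) / Real.sqrt ((x ^ 2 - 1) * (Q ^ 2 - 1))))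
      (-(A * P + Q) / ((A ^ 2 - 1) *
        Real.sqrt (A ^ 2 + P ^ 2 + Q ^ 2 + 2 * A * P * Q - 1))) A := by
  have ha : (0:ℝ) < A ^ 2 - 1 := by nlinarith
  have hq : (0:ℝ) < Q ^ 2 - 1 := by nlinarith
  have hD : (0:ℝ) < A ^ 2 + P ^ 2 + Q ^ 2 + 2 * A * P * Q - 1 := by
    nlinarith [mul_pos (mul_pos (by linarith : (0:ℝ) < A) (by linarith : (0:ℝ) < P)) (by linarith : (0:ℝ) < Q), ha, hq]
  set D := A ^ 2 + P ^ 2 + Q ^ 2 + 2 * A * P * Q - 1 with hDdef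
  have hsD : (0:ℝ) < Real.sqrt D := Real.sqrt_pos.2 hD
  have hsDsq : Real.sqrt D ^ 2 = D := Real.sq_sqrt hD.le
  set k := Real.sqrt ((A ^ 2 - 1) * (Q ^ 2 - 1)) with hkdef
  have hk : (0:ℝ) < k := Real.sqrt_pos.2 (by positivity)
  have hksq : k ^ 2 = (A ^ 2 - 1) * (Q ^ 2 - 1) := Real.sq_sqrt (by positivity)
  -- inner den derivative
  have hden : HasDerivAt (fun x : ℝ => Real.sqrt ((x ^ 2 - 1) * (Q ^ 2 - 1)))
      ((2 * A ^ 1 * (Q ^ 2 - 1)) / (2 * k)) A := by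
    exact (((hasDerivAt_pow 2 A).sub_const 1).mul_const (Q ^ 2 - 1)).sqrt (by positivity)
  have hnum : HasDerivAt (fun x : ℝ => P + x * Q) Q A := by
    simpa using ((hasDerivAt_id A).mul_const Q).const_add P
  have hu := hnum.fun_div hden hk.ne'
  have hgt : 1 < (P + A * Q) / k := by
    rw [lt_div_iff₀ hk]
    rw [one_mul]
    have : k < P + A * Q := by
      rw [hkdef]
      refine (Real.sqrt_lt' (by nlinarith)).2 ?_
      nlinarith
    linarith
  have H := arcosh_deriv _ _ _ hu hgt
  have hval : ((P + A * Q) / k) ^ 2 - 1 = D / k ^ 2 := by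
    field_simp
    rw [hksq]; ring
  rw [hval, hksq] at H
  have hsqrtq : Real.sqrt (D / ((A ^ 2 - 1) * (Q ^ 2 - 1))) = Real.sqrt D / k := by
    rw [Real.sqrt_div hD.le, hkdef]
  rw [hsqrtq] at H
  convert H using 1
  have hkk : Real.sqrt (A^2-1) * Real.sqrt (Q^2-1) = k := (Real.sqrt_mul (by positivity) _).symm
  rw [div_div_eq_mul_div]
  field_simp
  rw [← hkdef]
  linear_combination (-Q) * hksq

lemma term1_deriv (A B C : ℝ) (hA : 1 < A) (hB : 1 < B) (hC : 1 < C) :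
    HasDerivAt (fun x => arcosh ((x + B * C) / Real.sqrt ((B ^ 2 - 1) * (C ^ 2 - 1))))
      (1 / Real.sqrt (A ^ 2 + B ^ 2 + C ^ 2 + 2 * A * B * C - 1)) A := by
  have hb : (0:ℝ) < B ^ 2 - 1 := by nlinarith
  have hc : (0:ℝ) < C ^ 2 - 1 := by nlinarith
  have hD : (0:ℝ) < A ^ 2 + B ^ 2 + C ^ 2 + 2 * A * B * C - 1 := by
    nlinarith [mul_pos (mul_pos (by linarith : (0:ℝ) < A) (by linarith : (0:ℝ) < B)) (by linarith : (0:ℝ) < C)]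
  set D := A ^ 2 + B ^ 2 + C ^ 2 + 2 * A * B * C - 1 with hDdef
  have hsD : (0:ℝ) < Real.sqrt D := Real.sqrt_pos.2 hD
  set k := Real.sqrt ((B ^ 2 - 1) * (C ^ 2 - 1)) with hkdef
  have hk : (0:ℝ) < k := Real.sqrt_pos.2 (by positivity)
  have hksq : k ^ 2 = (B ^ 2 - 1) * (C ^ 2 - 1) := Real.sq_sqrt (by positivity)
  have hu : HasDerivAt (fun x : ℝ => (x + B * C) / k) (1 / k) A := by
    simpa using ((hasDerivAt_id A).add_const (B * C)).div_const k
  have hgt : 1 < (A + B * C) / k := by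
    rw [lt_div_iff₀ hk, one_mul, hkdef]
    refine (Real.sqrt_lt' (by nlinarith)).2 ?_
    nlinarith
  have H := arcosh_deriv _ _ _ hu hgt
  have hval : ((A + B * C) / k) ^ 2 - 1 = D / k ^ 2 := by
    field_simp
    rw [hksq]; ring
  rw [hval, hksq] at H
  have hsqrtq : Real.sqrt (D / ((B ^ 2 - 1) * (C ^ 2 - 1))) = Real.sqrt D / k := by
    rw [Real.sqrt_div hD.le, hkdef]
  rw [hsqrtq] at H
  convert H using 1
  field_simp

theorem deriv_s_first_variable (A B C : ℝ) (hA : 1 < A) (hB : 1 < B) (hC : 1 < C) :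
    HasDerivAt (fun x => s x B C)
      ((A - 1 - B - C) /
        ((A - 1) * Real.sqrt (A ^ 2 + B ^ 2 + C ^ 2 + 2 * A * B * C - 1))) A := by
  have h1 := term1_deriv A B C hA hB hC
  have h2 := term_deriv A B C hA hB hC
  have h3 := term_deriv A C B hA hC hB
  have hD : (0:ℝ) < A ^ 2 + B ^ 2 + C ^ 2 + 2 * A * B * C - 1 := by
    nlinarith [mul_pos (mul_pos (by linarith : (0:ℝ) < A) (by linarith : (0:ℝ) < B)) (by linarith : (0:ℝ) < C)]
  have hDD : A ^ 2 + C ^ 2 + B ^ 2 + 2 * A * C * B - 1 = A ^ 2 + B ^ 2 + C ^ 2 + 2 * A * B * C - 1 := by ring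
  rw [hDD] at h3
  have ha : (0:ℝ) < A ^ 2 - 1 := by nlinarith
  have hsD : (0:ℝ) < Real.sqrt (A ^ 2 + B ^ 2 + C ^ 2 + 2 * A * B * C - 1) := Real.sqrt_pos.2 hD
  have H := (h1.fun_add h2).fun_add h3
  refine H.congr_deriv ?_
  have hA1 : A - 1 ≠ 0 := by linarith
  field_simp
  ring
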